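/- Suppose 0 ≤ ρ < ρ̂₁. Then the infimum of g(t,s) over (t,s) ∈ (0,∞)² equals 4(μ₂+(1−2ρ)μ₁), and (t_A, s_A) = ((1−2ρ)/μ₁, 1/(μ₂−2ρμ₁)) is the unique minimizer of g on (0,∞)²; moreover this minimizer satisfies t_A > s_A. -/

import Mathlib

open Matrix

/-- The covariance matrix of `(X₁(t), X₂(s))`. -/
noncomputable def covM (ρ t s : ℝ) : Matrix (Fin 2) (Fin 2) ℝ :=
  !![t, ρ * min t s; ρ * min t s, s]

/-- The quadratic form `(x,y) Σ_{ts}⁻¹ (x,y)ᵀ`. -/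
noncomputable def quadF (ρ t s x y : ℝ) : ℝ :=
  dotProduct ![x, y] ((covM ρ t s)⁻¹.mulVec ![x, y])

/-- `g(t,s) = inf{ (x,y) Σ_{ts}⁻¹ (x,y)ᵀ : x ≥ 1+μ₁t, y ≥ 1+μ₂s }`. -/
noncomputable def gFun (μ₁ μ₂ ρ t s : ℝ) : ℝ :=
  sInf { q : ℝ | ∃ x y : ℝ, 1 + μ₁ * t ≤ x ∧ 1 + μ₂ * s ≤ y ∧ q = quadF ρ t s x y }

/-- `g₃(t,s)`: the quadratic form at the corner point `(1+μ₁t, 1+μ₂s)`. -/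
noncomputable def g3Fun (μ₁ μ₂ ρ t s : ℝ) : ℝ :=
  quadF ρ t s (1 + μ₁ * t) (1 + μ₂ * s)

lemma quadF_eq (ρ t s x y : ℝ) (h : t * s - (ρ * min t s) ^ 2 ≠ 0) :
    quadF ρ t s x y
      = (s * x ^ 2 - 2 * (ρ * min t s) * x * y + t * y ^ 2) / (t * s - (ρ * min t s) ^ 2) := by
  have hdet : (covM ρ t s).det = t * s - (ρ * min t s) ^ 2 := by
    simp [covM, Matrix.det_fin_two_of]; ring
  have hinv : (covM ρ t s)⁻¹
      = (t * s - (ρ * min t s) ^ 2)⁻¹ • !![s, -(ρ * min t s); -(ρ * min t s), t] := by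
    rw [Matrix.inv_def, hdet, Ring.inverse_eq_inv']
    congr 1
    rw [show covM ρ t s = !![t, ρ * min t s; ρ * min t s, s] from rfl,
      Matrix.adjugate_fin_two_of]
  rw [quadF, hinv]
  simp [Matrix.mulVec, dotProduct, Fin.sum_univ_two]
  field_simp
  ring

lemma det_pos (ρ t s : ℝ) (hρ0 : 0 ≤ ρ) (hρ1 : ρ < 1) (ht : 0 < t) (hs : 0 < s) :
    0 < t * s - (ρ * min t s) ^ 2 := by
  have hm0 : 0 < min t s := lt_min ht hs
  have hm1 : min t s ≤ t := min_le_left t s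
  have hm2 : min t s ≤ s := min_le_right t s
  have ham : ρ * min t s < min t s := by nlinarith
  nlinarith [mul_le_mul hm1 hm2 hm0.le ht.le, mul_nonneg hρ0 hm0.le,
    mul_lt_mul_of_pos_right ham hm0]

/-- Main pointwise lower bound with gap. -/
lemma quad_lower (μ₁ μ₂ ρ t s x y : ℝ) (hμ1 : 0 < μ₁) (hμ12 : μ₁ ≤ μ₂)
    (hρ0 : 0 ≤ ρ) (hρh : ρ < 1 / 2) (ht : 0 < t) (hs : 0 < s)
    (hx : 1 + μ₁ * t ≤ x) (hy : 1 + μ₂ * s ≤ y) :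
    4 * (μ₂ + (1 - 2 * ρ) * μ₁)
      + (((μ₁ + (μ₂ - 2 * ρ * μ₁)) - (μ₁ ^ 2 * t + (μ₂ - 2 * ρ * μ₁) * μ₂ * s)) ^ 2
          + 8 * (μ₁ + (μ₂ - 2 * ρ * μ₁)) * ρ * μ₁ * (μ₂ - 2 * ρ * μ₁) * (s - min t s))
        / (μ₁ ^ 2 * t + 2 * ρ * μ₁ * (μ₂ - 2 * ρ * μ₁) * min t s + (μ₂ - 2 * ρ * μ₁) ^ 2 * s)
      ≤ quadF ρ t s x y := by
  set ν := μ₂ - 2 * ρ * μ₁ with hνdef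
  have hν : 0 < ν := by nlinarith
  set m := min t s with hmdef
  have hm0 : 0 < m := lt_min ht hs
  have hm2 : m ≤ s := min_le_right t s
  have hD : 0 < t * s - (ρ * m) ^ 2 := det_pos ρ t s hρ0 (by linarith) ht hs
  set c := μ₁ + ν with hcdef
  set u := μ₁ ^ 2 * t + ν * μ₂ * s with hudef
  set W := μ₁ ^ 2 * t + 2 * ρ * μ₁ * ν * m + ν ^ 2 * s with hWdef
  set D := t * s - (ρ * m) ^ 2 with hDdef
  set G := (c - u) ^ 2 + 8 * c * ρ * μ₁ * ν * (s - m) with hGdef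
  have hc : 0 < c := by positivity
  have hW : 0 < W := by
    have : 0 ≤ 2 * ρ * μ₁ * ν * m := by positivity
    nlinarith [mul_pos (mul_pos hμ1 hμ1) ht, mul_pos (mul_pos hν hν) hs]
  rw [quadF_eq ρ t s x y hD.ne']
  have h4c : 4 * (μ₂ + (1 - 2 * ρ) * μ₁) = 4 * c := by rw [hcdef, hνdef]; ring
  have hrw : 4 * (μ₂ + (1 - 2 * ρ) * μ₁) + G / W = (4 * c * W + G) / W := by
    rw [h4c]; field_simp
  rw [hrw, div_le_div_iff₀ hW hD]
  have hμ2 : 0 < μ₂ := lt_of_lt_of_le hμ1 hμ12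
  have hu : 0 < u := by
    rw [hudef]
    have h1 := mul_pos (mul_pos hν hμ2) hs
    nlinarith [mul_pos (mul_pos hμ1 hμ1) ht]
  have h1 : c + u ≤ μ₁ * x + ν * y := by
    have e1 : μ₁ * (1 + μ₁ * t) ≤ μ₁ * x := mul_le_mul_of_nonneg_left hx hμ1.le
    have e2 : ν * (1 + μ₂ * s) ≤ ν * y := mul_le_mul_of_nonneg_left hy hν.le
    rw [hcdef, hudef]
    nlinarith
  have h2 : (c + u) ^ 2 ≤ (μ₁ * x + ν * y) ^ 2 :=
    pow_le_pow_left₀ (by positivity) h1 2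
  have h4 : (c + u) ^ 2 = 4 * c * W + G := by rw [hGdef, hWdef, hudef, hcdef]; ring
  have hkey : (s * x ^ 2 - 2 * (ρ * m) * x * y + t * y ^ 2) * W
      = D * (μ₁ * x + ν * y) ^ 2
        + ((ρ * μ₁ * m + ν * s) * x - (μ₁ * t + ρ * ν * m) * y) ^ 2 := by
    rw [hWdef, hDdef]; ring
  calc (4 * c * W + G) * D = D * (c + u) ^ 2 := by rw [← h4]; ring
    _ ≤ D * (μ₁ * x + ν * y) ^ 2 := mul_le_mul_of_nonneg_left h2 hD.le
    _ ≤ D * (μ₁ * x + ν * y) ^ 2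
        + ((ρ * μ₁ * m + ν * s) * x - (μ₁ * t + ρ * ν * m) * y) ^ 2 :=
        le_add_of_nonneg_right (sq_nonneg _)
    _ = (s * x ^ 2 - 2 * (ρ * m) * x * y + t * y ^ 2) * W := hkey.symm

section helpers
variable {μ₁ μ₂ ρ t s : ℝ} (hμ1 : 0 < μ₁) (hμ12 : μ₁ ≤ μ₂)
  (hρ0 : 0 ≤ ρ) (hρh : ρ < 1 / 2) (ht : 0 < t) (hs : 0 < s)

include hμ1 hμ12 hρ0 hρh ht hs

lemma W_pos : 0 < μ₁ ^ 2 * t + 2 * ρ * μ₁ * (μ₂ - 2 * ρ * μ₁) * min t s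
    + (μ₂ - 2 * ρ * μ₁) ^ 2 * s := by
  have hν : 0 < μ₂ - 2 * ρ * μ₁ := by nlinarith
  have hm0 : 0 < min t s := lt_min ht hs
  have h1 : 0 ≤ 2 * ρ * μ₁ * (μ₂ - 2 * ρ * μ₁) * min t s := by positivity
  nlinarith [mul_pos (mul_pos hμ1 hμ1) ht, mul_pos (mul_pos hν hν) hs]

omit ht hs in
lemma G_nonneg : 0 ≤ ((μ₁ + (μ₂ - 2 * ρ * μ₁)) - (μ₁ ^ 2 * t + (μ₂ - 2 * ρ * μ₁) * μ₂ * s)) ^ 2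
    + 8 * (μ₁ + (μ₂ - 2 * ρ * μ₁)) * ρ * μ₁ * (μ₂ - 2 * ρ * μ₁) * (s - min t s) := by
  have hν : 0 < μ₂ - 2 * ρ * μ₁ := by nlinarith
  have hm2 : min t s ≤ s := min_le_right t s
  have h1 : 0 ≤ 8 * (μ₁ + (μ₂ - 2 * ρ * μ₁)) * ρ * μ₁ * (μ₂ - 2 * ρ * μ₁) * (s - min t s) := by
    have : (0:ℝ) ≤ s - min t s := by linarith
    positivity
  nlinarith [sq_nonneg ((μ₁ + (μ₂ - 2 * ρ * μ₁)) - (μ₁ ^ 2 * t + (μ₂ - 2 * ρ * μ₁) * μ₂ * s))]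

lemma quad_lower_M {x y : ℝ} (hx : 1 + μ₁ * t ≤ x) (hy : 1 + μ₂ * s ≤ y) :
    4 * (μ₂ + (1 - 2 * ρ) * μ₁) ≤ quadF ρ t s x y := by
  refine le_trans ?_ (quad_lower μ₁ μ₂ ρ t s x y hμ1 hμ12 hρ0 hρh ht hs hx hy)
  exact le_add_of_nonneg_right (div_nonneg (G_nonneg hμ1 hμ12 hρ0 hρh)
    (W_pos hμ1 hμ12 hρ0 hρh ht hs).le)

omit hμ1 hμ12 hρ0 hρh ht hs in
lemma gFun_nonempty :
    {q : ℝ | ∃ x y : ℝ, 1 + μ₁ * t ≤ x ∧ 1 + μ₂ * s ≤ y ∧ q = quadF ρ t s x y}.Nonempty :=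
  ⟨quadF ρ t s (1 + μ₁ * t) (1 + μ₂ * s), ⟨_, _, le_rfl, le_rfl, rfl⟩⟩

lemma gFun_ge : 4 * (μ₂ + (1 - 2 * ρ) * μ₁) ≤ gFun μ₁ μ₂ ρ t s := by
  refine le_csInf gFun_nonempty ?_
  rintro q ⟨x, y, hx, hy, rfl⟩
  exact quad_lower_M hμ1 hμ12 hρ0 hρh ht hs hx hy

lemma gFun_bddBelow :
    BddBelow {q : ℝ | ∃ x y : ℝ, 1 + μ₁ * t ≤ x ∧ 1 + μ₂ * s ≤ y ∧ q = quadF ρ t s x y} := by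
  refine ⟨4 * (μ₂ + (1 - 2 * ρ) * μ₁), ?_⟩
  rintro q ⟨x, y, hx, hy, rfl⟩
  exact quad_lower_M hμ1 hμ12 hρ0 hρh ht hs hx hy

/-- If the gap term is positive, `gFun` is strictly above the candidate minimum. -/
lemma gFun_gt (hG : 0 < ((μ₁ + (μ₂ - 2 * ρ * μ₁)) - (μ₁ ^ 2 * t + (μ₂ - 2 * ρ * μ₁) * μ₂ * s)) ^ 2
    + 8 * (μ₁ + (μ₂ - 2 * ρ * μ₁)) * ρ * μ₁ * (μ₂ - 2 * ρ * μ₁) * (s - min t s)) :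
    4 * (μ₂ + (1 - 2 * ρ) * μ₁) < gFun μ₁ μ₂ ρ t s := by
  have hW := W_pos hμ1 hμ12 hρ0 hρh ht hs
  have hgap := div_pos hG hW
  have hle : 4 * (μ₂ + (1 - 2 * ρ) * μ₁)
      + (((μ₁ + (μ₂ - 2 * ρ * μ₁)) - (μ₁ ^ 2 * t + (μ₂ - 2 * ρ * μ₁) * μ₂ * s)) ^ 2
          + 8 * (μ₁ + (μ₂ - 2 * ρ * μ₁)) * ρ * μ₁ * (μ₂ - 2 * ρ * μ₁) * (s - min t s))
        / (μ₁ ^ 2 * t + 2 * ρ * μ₁ * (μ₂ - 2 * ρ * μ₁) * min t s + (μ₂ - 2 * ρ * μ₁) ^ 2 * s)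
      ≤ gFun μ₁ μ₂ ρ t s := by
    refine le_csInf gFun_nonempty ?_
    rintro q ⟨x, y, hx, hy, rfl⟩
    exact quad_lower μ₁ μ₂ ρ t s x y hμ1 hμ12 hρ0 hρh ht hs hx hy
  linarith

end helpers

lemma sq_expand_aux (c z : ℝ) (hz : 0 ≤ z) : 4 * c ^ 2 + 4 * c * z ≤ (2 * c + z) ^ 2 := by
  nlinarith [sq_nonneg z]

set_option maxHeartbeats 2000000 in
/-- Abstract core of the strict-gap estimate. -/
lemma gap2_core (μ₁ ν c C1 C2 R0 K δ D r t s a b x y : ℝ)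
    (hμ1 : 0 < μ₁) (hν : 0 < ν) (hcpos : 0 < c)
    (hD : D = t * s - r ^ 2) (hDpos : 0 < D)
    (hC1 : C1 = μ₁ * r + ν * s) (hC2 : C2 = μ₁ * t + ν * r)
    (hC1p : 0 < C1) (hC2p : 0 < C2)
    (hW : μ₁ ^ 2 * t + 2 * μ₁ * ν * r + ν ^ 2 * s = c)
    (hab2 : μ₁ * a + ν * b = 2 * c)
    (hR0 : R0 = C1 * a - C2 * b) (hR0ne : R0 ≠ 0)
    (hK : K = min (μ₁ / C1) (ν / C2))
    (hδ : δ = min (R0 ^ 2 / (4 * c * D)) (2 * K * |R0|))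
    (hx : a ≤ x) (hy : b ≤ y) :
    (4 * c + δ) * D ≤ s * x ^ 2 - 2 * r * x * y + t * y ^ 2 := by
  have hp : 0 ≤ x - a := by linarith
  have hq : 0 ≤ y - b := by linarith
  have hKp : 0 < K := by rw [hK]; exact lt_min (div_pos hμ1 hC1p) (div_pos hν hC2p)
  have hR02 : 0 < R0 ^ 2 := by positivity
  have hkey : (s * x ^ 2 - 2 * r * x * y + t * y ^ 2) * c
      = D * (μ₁ * x + ν * y) ^ 2 + (C1 * x - C2 * y) ^ 2 := by
    rw [hD, hC1, hC2]
    linear_combination (-(s * x ^ 2 - 2 * r * x * y + t * y ^ 2)) * hW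
  have hz0 : 0 ≤ μ₁ * (x - a) + ν * (y - b) := by
    have := mul_nonneg hμ1.le hp
    have := mul_nonneg hν.le hq
    linarith
  have hL : 2 * c + (μ₁ * (x - a) + ν * (y - b)) = μ₁ * x + ν * y := by
    linear_combination -hab2
  have hsqL : 4 * c ^ 2 + 4 * c * (μ₁ * (x - a) + ν * (y - b)) ≤ (μ₁ * x + ν * y) ^ 2 := by
    rw [← hL]; exact sq_expand_aux c _ hz0
  by_cases hcase : C1 * (x - a) + C2 * (y - b) ≤ |R0| / 2
  · have hC1x := mul_nonneg hC1p.le hp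
    have hC2y := mul_nonneg hC2p.le hq
    have hzabs : |C1 * (x - a) - C2 * (y - b)| ≤ |R0| / 2 := by
      rw [abs_le]; constructor <;> nlinarith
    have habs : |R0| / 2 ≤ |C1 * x - C2 * y| := by
      have h1 := abs_sub_abs_le_abs_sub R0 (C1 * x - C2 * y)
      have h2 : R0 - (C1 * x - C2 * y) = -(C1 * (x - a) - C2 * (y - b)) := by
        rw [hR0]; ring
      rw [h2, abs_neg] at h1
      linarith
    have hsq : R0 ^ 2 / 4 ≤ (C1 * x - C2 * y) ^ 2 := by
      have h3 := mul_self_le_mul_self (by positivity : (0:ℝ) ≤ |R0| / 2) habs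
      calc R0 ^ 2 / 4 = |R0| / 2 * (|R0| / 2) := by rw [← sq_abs R0]; ring
        _ ≤ |C1 * x - C2 * y| * |C1 * x - C2 * y| := h3
        _ = (C1 * x - C2 * y) ^ 2 := by rw [← sq_abs (C1 * x - C2 * y)]; ring
    have hδ1 : δ ≤ R0 ^ 2 / (4 * c * D) := by rw [hδ]; exact min_le_left _ _
    have hδD : δ * D ≤ R0 ^ 2 / (4 * c) := by
      have h6 : R0 ^ 2 / (4 * c * D) * D = R0 ^ 2 / (4 * c) := by
        field_simp [hcpos.ne', hDpos.ne']
      calc δ * D ≤ R0 ^ 2 / (4 * c * D) * D := mul_le_mul_of_nonneg_right hδ1 hDpos.le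
        _ = R0 ^ 2 / (4 * c) := h6
    have hNc : D * (4 * c ^ 2) + R0 ^ 2 / 4
        ≤ (s * x ^ 2 - 2 * r * x * y + t * y ^ 2) * c := by
      rw [hkey]
      have h7 := mul_le_mul_of_nonneg_left hsqL hDpos.le
      nlinarith [mul_nonneg (mul_nonneg (mul_nonneg (by norm_num : (0:ℝ) ≤ 4) hcpos.le)
        hDpos.le) hz0]
    rw [← mul_le_mul_iff_of_pos_right hcpos]
    calc (4 * c + δ) * D * c = D * (4 * c ^ 2) + δ * D * c := by ring
      _ ≤ D * (4 * c ^ 2) + R0 ^ 2 / (4 * c) * c := by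
          nlinarith [mul_le_mul_of_nonneg_right hδD hcpos.le]
      _ = D * (4 * c ^ 2) + R0 ^ 2 / 4 := by
          have h8 : R0 ^ 2 / (4 * c) * c = R0 ^ 2 / 4 := by
            field_simp
            try ring
          rw [h8]
      _ ≤ (s * x ^ 2 - 2 * r * x * y + t * y ^ 2) * c := hNc
  · push_neg at hcase
    have hK1 : K * C1 ≤ μ₁ := (le_div_iff₀ hC1p).mp (by rw [hK]; exact min_le_left _ _)
    have hK2 : K * C2 ≤ ν := (le_div_iff₀ hC2p).mp (by rw [hK]; exact min_le_right _ _)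
    have hlin : K * (|R0| / 2) ≤ μ₁ * (x - a) + ν * (y - b) := by
      nlinarith [mul_le_mul_of_nonneg_right hK1 hp, mul_le_mul_of_nonneg_right hK2 hq,
        mul_le_mul_of_nonneg_left hcase.le hKp.le]
    have hδ2 : δ ≤ 2 * K * |R0| := by rw [hδ]; exact min_le_right _ _
    have hNc : D * (4 * c ^ 2 + 4 * c * (K * (|R0| / 2)))
        ≤ (s * x ^ 2 - 2 * r * x * y + t * y ^ 2) * c := by
      rw [hkey]
      nlinarith [sq_nonneg (C1 * x - C2 * y),
        mul_le_mul_of_nonneg_left hsqL hDpos.le,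
        mul_le_mul_of_nonneg_left (mul_le_mul_of_nonneg_left hlin
          (by positivity : (0:ℝ) ≤ 4 * c)) hDpos.le]
    rw [← mul_le_mul_iff_of_pos_right hcpos]
    calc (4 * c + δ) * D * c ≤ (4 * c + 2 * K * |R0|) * D * c := by
          nlinarith [mul_pos hDpos hcpos]
      _ = D * (4 * c ^ 2 + 4 * c * (K * (|R0| / 2))) := by ring
      _ ≤ (s * x ^ 2 - 2 * r * x * y + t * y ^ 2) * c := hNc

set_option maxHeartbeats 2000000 in
/-- The strict gap in the case `u = c`, `ρ·min = ρ·s`, `ν·s ≠ 1`. -/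
lemma gap2 (μ₁ μ₂ ρ t s : ℝ) (hμ1 : 0 < μ₁) (hμ12 : μ₁ ≤ μ₂) (hρ0 : 0 ≤ ρ)
    (hρh : ρ < 1 / 2) (ht : 0 < t) (hs : 0 < s)
    (hu : μ₁ ^ 2 * t + (μ₂ - 2 * ρ * μ₁) * μ₂ * s = μ₁ + (μ₂ - 2 * ρ * μ₁))
    (hms : ρ * min t s = ρ * s)
    (hsA : (μ₂ - 2 * ρ * μ₁) * s ≠ 1) :
    4 * (μ₂ + (1 - 2 * ρ) * μ₁) < gFun μ₁ μ₂ ρ t s := by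
  have hν : 0 < μ₂ - 2 * ρ * μ₁ := by nlinarith
  have hμ2 : 0 < μ₂ := lt_of_lt_of_le hμ1 hμ12
  have hc : 0 < μ₁ + (μ₂ - 2 * ρ * μ₁) := by linarith
  have hD : 0 < t * s - (ρ * min t s) ^ 2 := det_pos ρ t s hρ0 (by linarith) ht hs
  have hDs : t * s - (ρ * min t s) ^ 2 = t * s - (ρ * s) ^ 2 := by rw [hms]
  have hD' : 0 < t * s - (ρ * s) ^ 2 := hDs ▸ hD
  have hC1p : 0 < μ₁ * (ρ * s) + (μ₂ - 2 * ρ * μ₁) * s := by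
    nlinarith [mul_pos hν hs, mul_nonneg (mul_nonneg hμ1.le hρ0) hs.le]
  have hC2p : 0 < μ₁ * t + (μ₂ - 2 * ρ * μ₁) * (ρ * s) := by
    nlinarith [mul_pos hμ1 ht, mul_nonneg (mul_nonneg hν.le hρ0) hs.le]
  have hR0val : μ₁ * ((μ₁ * (ρ * s) + (μ₂ - 2 * ρ * μ₁) * s) * (1 + μ₁ * t)
        - (μ₁ * t + (μ₂ - 2 * ρ * μ₁) * (ρ * s)) * (1 + μ₂ * s))
      = (μ₁ + (μ₂ - 2 * ρ * μ₁)) * ((μ₂ - 2 * ρ * μ₁) * s - 1) := by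
    linear_combination (μ₁ * (ρ * s) + (μ₂ - 2 * ρ * μ₁) * s - (1 + μ₂ * s)) * hu
  have hR0ne : (μ₁ * (ρ * s) + (μ₂ - 2 * ρ * μ₁) * s) * (1 + μ₁ * t)
      - (μ₁ * t + (μ₂ - 2 * ρ * μ₁) * (ρ * s)) * (1 + μ₂ * s) ≠ 0 := by
    intro h
    rw [h, mul_zero] at hR0val
    rcases mul_eq_zero.mp hR0val.symm with h3 | h3
    · exact absurd h3 hc.ne'
    · exact hsA (by linarith)
  set R0 := (μ₁ * (ρ * s) + (μ₂ - 2 * ρ * μ₁) * s) * (1 + μ₁ * t)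
      - (μ₁ * t + (μ₂ - 2 * ρ * μ₁) * (ρ * s)) * (1 + μ₂ * s) with hR0def
  set K := min (μ₁ / (μ₁ * (ρ * s) + (μ₂ - 2 * ρ * μ₁) * s))
      ((μ₂ - 2 * ρ * μ₁) / (μ₁ * t + (μ₂ - 2 * ρ * μ₁) * (ρ * s))) with hKdef
  set δ := min (R0 ^ 2 / (4 * (μ₁ + (μ₂ - 2 * ρ * μ₁)) * (t * s - (ρ * s) ^ 2)))
      (2 * K * |R0|) with hδdef
  have hKp : 0 < K := lt_min (div_pos hμ1 hC1p) (div_pos hν hC2p)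
  have hR02 : 0 < R0 ^ 2 := by
    have h0 : 0 < |R0| := abs_pos.mpr hR0ne
    rw [← sq_abs]; positivity
  have hδp : 0 < δ := lt_min (div_pos hR02 (by positivity)) (by positivity)
  have hpt : ∀ x y : ℝ, 1 + μ₁ * t ≤ x → 1 + μ₂ * s ≤ y →
      4 * (μ₂ + (1 - 2 * ρ) * μ₁) + δ ≤ quadF ρ t s x y := by
    intro x y hx hy
    rw [quadF_eq ρ t s x y hD.ne', hms, le_div_iff₀ hD']
    have hcore := gap2_core μ₁ (μ₂ - 2 * ρ * μ₁) (μ₁ + (μ₂ - 2 * ρ * μ₁))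
      (μ₁ * (ρ * s) + (μ₂ - 2 * ρ * μ₁) * s) (μ₁ * t + (μ₂ - 2 * ρ * μ₁) * (ρ * s))
      R0 K δ (t * s - (ρ * s) ^ 2) (ρ * s) t s (1 + μ₁ * t) (1 + μ₂ * s) x y
      hμ1 hν hc rfl hD' rfl rfl hC1p hC2p
      (by linear_combination hu) (by linear_combination hu) hR0def hR0ne hKdef hδdef hx hy
    calc (4 * (μ₂ + (1 - 2 * ρ) * μ₁) + δ) * (t * s - (ρ * s) ^ 2)
        = (4 * (μ₁ + (μ₂ - 2 * ρ * μ₁)) + δ) * (t * s - (ρ * s) ^ 2) := by ring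
      _ ≤ s * x ^ 2 - 2 * (ρ * s) * x * y + t * y ^ 2 := hcore
  have hge : 4 * (μ₂ + (1 - 2 * ρ) * μ₁) + δ ≤ gFun μ₁ μ₂ ρ t s := by
    refine le_csInf gFun_nonempty ?_
    rintro q ⟨x, y, hx, hy, rfl⟩
    exact hpt x y hx hy
  linarith

lemma tA_gt_sA (μ₁ μ₂ ρ : ℝ) (hμ1 : 0 < μ₁) (hμ12 : μ₁ ≤ μ₂) (hρ0 : 0 ≤ ρ) (hρh : ρ < 1 / 2)
    (hC : 0 < 4 * μ₁ * ρ ^ 2 - 2 * (μ₁ + μ₂) * ρ + (μ₂ - μ₁)) :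
    1 / (μ₂ - 2 * ρ * μ₁) < (1 - 2 * ρ) / μ₁ := by
  have hν : 0 < μ₂ - 2 * ρ * μ₁ := by nlinarith
  rw [div_lt_div_iff₀ hν hμ1]
  nlinarith

set_option maxHeartbeats 1000000 in
lemma gFun_value (μ₁ μ₂ ρ : ℝ) (hμ1 : 0 < μ₁) (hμ12 : μ₁ ≤ μ₂) (hρ0 : 0 ≤ ρ)
    (hρh : ρ < 1 / 2)
    (hC : 0 < 4 * μ₁ * ρ ^ 2 - 2 * (μ₁ + μ₂) * ρ + (μ₂ - μ₁)) :
    gFun μ₁ μ₂ ρ ((1 - 2 * ρ) / μ₁) (1 / (μ₂ - 2 * ρ * μ₁))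
      = 4 * (μ₂ + (1 - 2 * ρ) * μ₁) := by
  have hν : 0 < μ₂ - 2 * ρ * μ₁ := by nlinarith
  have htA : 0 < (1 - 2 * ρ) / μ₁ := div_pos (by linarith) hμ1
  have hsA : 0 < 1 / (μ₂ - 2 * ρ * μ₁) := by positivity
  have hts := tA_gt_sA μ₁ μ₂ ρ hμ1 hμ12 hρ0 hρh hC
  have hmin : min ((1 - 2 * ρ) / μ₁) (1 / (μ₂ - 2 * ρ * μ₁)) = 1 / (μ₂ - 2 * ρ * μ₁) :=
    min_eq_right hts.le
  have hD : 0 < (1 - 2 * ρ) / μ₁ * (1 / (μ₂ - 2 * ρ * μ₁))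
      - (ρ * min ((1 - 2 * ρ) / μ₁) (1 / (μ₂ - 2 * ρ * μ₁))) ^ 2 :=
    det_pos ρ _ _ hρ0 (by linarith) htA hsA
  have hval : quadF ρ ((1 - 2 * ρ) / μ₁) (1 / (μ₂ - 2 * ρ * μ₁))
      (1 + μ₁ * ((1 - 2 * ρ) / μ₁)) (1 + μ₂ * (1 / (μ₂ - 2 * ρ * μ₁)))
      = 4 * (μ₂ + (1 - 2 * ρ) * μ₁) := by
    have hD2 := hD
    rw [hmin] at hD2
    rw [quadF_eq ρ ((1 - 2 * ρ) / μ₁) (1 / (μ₂ - 2 * ρ * μ₁)) _ _ hD.ne', hmin]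
    rw [div_eq_iff hD2.ne']
    field_simp
    ring
  refine le_antisymm ?_ (gFun_ge hμ1 hμ12 hρ0 hρh htA hsA)
  refine csInf_le (gFun_bddBelow hμ1 hμ12 hρ0 hρh htA hsA) ?_
  exact ⟨_, _, le_rfl, le_rfl, hval.symm⟩

theorem stmt3 (μ₁ μ₂ ρ : ℝ) (hμ1 : 0 < μ₁) (hμ12 : μ₁ ≤ μ₂)
    (hρl : -1 < ρ) (hρu : ρ < 1) (hρ0 : 0 ≤ ρ)
    (hρ1 : ρ < (μ₁ + μ₂ - Real.sqrt ((μ₁ + μ₂) ^ 2 - 4 * μ₁ * (μ₂ - μ₁))) / (4 * μ₁)) :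
    IsLeast { v : ℝ | ∃ t s : ℝ, 0 < t ∧ 0 < s ∧ v = gFun μ₁ μ₂ ρ t s }
      (4 * (μ₂ + (1 - 2 * ρ) * μ₁)) ∧
    (gFun μ₁ μ₂ ρ ((1 - 2 * ρ) / μ₁) (1 / (μ₂ - 2 * ρ * μ₁))
        = 4 * (μ₂ + (1 - 2 * ρ) * μ₁)) ∧
    (∀ t s : ℝ, 0 < t → 0 < s →
      gFun μ₁ μ₂ ρ t s = 4 * (μ₂ + (1 - 2 * ρ) * μ₁) →
      t = (1 - 2 * ρ) / μ₁ ∧ s = 1 / (μ₂ - 2 * ρ * μ₁)) ∧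
    (1 - 2 * ρ) / μ₁ > 1 / (μ₂ - 2 * ρ * μ₁) := by
  -- Derive the quadratic condition and ρ < 1/2 from the hypothesis on ρ̂₁.
  have hE : 0 ≤ (μ₁ + μ₂) ^ 2 - 4 * μ₁ * (μ₂ - μ₁) := by nlinarith [sq_nonneg (μ₂ - μ₁)]
  have h4 : ρ * (4 * μ₁) < μ₁ + μ₂ - Real.sqrt ((μ₁ + μ₂) ^ 2 - 4 * μ₁ * (μ₂ - μ₁)) :=
    (lt_div_iff₀ (by positivity)).mp hρ1
  have hsq : Real.sqrt ((μ₁ + μ₂) ^ 2 - 4 * μ₁ * (μ₂ - μ₁)) < μ₁ + μ₂ - 4 * μ₁ * ρ := by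
    linarith
  have hy : 0 < μ₁ + μ₂ - 4 * μ₁ * ρ :=
    lt_of_le_of_lt (Real.sqrt_nonneg _) hsq
  have hE2 : (μ₁ + μ₂) ^ 2 - 4 * μ₁ * (μ₂ - μ₁) < (μ₁ + μ₂ - 4 * μ₁ * ρ) ^ 2 := by
    calc (μ₁ + μ₂) ^ 2 - 4 * μ₁ * (μ₂ - μ₁)
        = Real.sqrt ((μ₁ + μ₂) ^ 2 - 4 * μ₁ * (μ₂ - μ₁)) ^ 2 := (Real.sq_sqrt hE).symm
      _ < (μ₁ + μ₂ - 4 * μ₁ * ρ) ^ 2 := by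
          nlinarith [Real.sqrt_nonneg ((μ₁ + μ₂) ^ 2 - 4 * μ₁ * (μ₂ - μ₁))]
  have hC : 0 < 4 * μ₁ * ρ ^ 2 - 2 * (μ₁ + μ₂) * ρ + (μ₂ - μ₁) := by nlinarith
  have hsqge : μ₂ - μ₁ ≤ Real.sqrt ((μ₁ + μ₂) ^ 2 - 4 * μ₁ * (μ₂ - μ₁)) := by
    rw [show (μ₁ + μ₂) ^ 2 - 4 * μ₁ * (μ₂ - μ₁) = (μ₂ - μ₁) ^ 2 + (2 * μ₁) ^ 2 by ring]
    calc μ₂ - μ₁ = Real.sqrt ((μ₂ - μ₁) ^ 2) := by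
          rw [Real.sqrt_sq (by linarith)]
      _ ≤ Real.sqrt ((μ₂ - μ₁) ^ 2 + (2 * μ₁) ^ 2) :=
          Real.sqrt_le_sqrt (by nlinarith [sq_nonneg (2 * μ₁)])
  have hρh : ρ < 1 / 2 := by nlinarith
  have hν : 0 < μ₂ - 2 * ρ * μ₁ := by nlinarith
  have hts := tA_gt_sA μ₁ μ₂ ρ hμ1 hμ12 hρ0 hρh hC
  have htA : 0 < (1 - 2 * ρ) / μ₁ := div_pos (by linarith) hμ1
  have hsA : 0 < 1 / (μ₂ - 2 * ρ * μ₁) := by positivity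
  have hvalue := gFun_value μ₁ μ₂ ρ hμ1 hμ12 hρ0 hρh hC
  refine ⟨⟨⟨(1 - 2 * ρ) / μ₁, 1 / (μ₂ - 2 * ρ * μ₁), htA, hsA, hvalue.symm⟩, ?_⟩,
    hvalue, ?_, hts⟩
  · rintro v ⟨t, s, ht, hs, rfl⟩
    exact gFun_ge hμ1 hμ12 hρ0 hρh ht hs
  · intro t s ht hs heq
    -- Step 1: u = c
    by_cases hu : μ₁ ^ 2 * t + (μ₂ - 2 * ρ * μ₁) * μ₂ * s = μ₁ + (μ₂ - 2 * ρ * μ₁)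
    swap
    · exfalso
      have hG : 0 < ((μ₁ + (μ₂ - 2 * ρ * μ₁)) - (μ₁ ^ 2 * t + (μ₂ - 2 * ρ * μ₁) * μ₂ * s)) ^ 2
          + 8 * (μ₁ + (μ₂ - 2 * ρ * μ₁)) * ρ * μ₁ * (μ₂ - 2 * ρ * μ₁) * (s - min t s) := by
        have h1 : (μ₁ + (μ₂ - 2 * ρ * μ₁)) - (μ₁ ^ 2 * t + (μ₂ - 2 * ρ * μ₁) * μ₂ * s) ≠ 0 :=
          sub_ne_zero.mpr (Ne.symm hu)
        have h2 : 0 ≤ 8 * (μ₁ + (μ₂ - 2 * ρ * μ₁)) * ρ * μ₁ * (μ₂ - 2 * ρ * μ₁)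
            * (s - min t s) := by
          have h3 : (0:ℝ) ≤ s - min t s := by
            have := min_le_right t s; linarith
          have hc : (0:ℝ) < μ₁ + (μ₂ - 2 * ρ * μ₁) := by linarith
          positivity
        positivity
      exact absurd heq (ne_of_gt (gFun_gt hμ1 hμ12 hρ0 hρh ht hs hG))
    by_cases hms : ρ * min t s = ρ * s
    swap
    · exfalso
      have hρpos : 0 < ρ := by
        rcases hρ0.lt_or_eq with h | h
        · exact h
        · exact absurd (by rw [← h]; ring) hms
      have hmts : min t s = t := by
        rcases le_total t s with h | h
        · exact min_eq_left h
        · exact absurd (by rw [min_eq_right h]) hms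
      have hst : t < s := by
        rcases lt_or_ge t s with h | h
        · exact h
        · exfalso; exact hms (by rw [min_eq_right h])
      have hG : 0 < ((μ₁ + (μ₂ - 2 * ρ * μ₁)) - (μ₁ ^ 2 * t + (μ₂ - 2 * ρ * μ₁) * μ₂ * s)) ^ 2
          + 8 * (μ₁ + (μ₂ - 2 * ρ * μ₁)) * ρ * μ₁ * (μ₂ - 2 * ρ * μ₁) * (s - min t s) := by
        rw [hmts]
        have hc : (0:ℝ) < μ₁ + (μ₂ - 2 * ρ * μ₁) := by linarith
        have h3 : (0:ℝ) < s - t := by linarith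
        nlinarith [sq_nonneg ((μ₁ + (μ₂ - 2 * ρ * μ₁)) - (μ₁ ^ 2 * t + (μ₂ - 2 * ρ * μ₁) * μ₂ * s)),
          mul_pos (mul_pos (mul_pos (mul_pos (mul_pos (by norm_num : (0:ℝ) < 8) hc) hρpos) hμ1) hν) h3]
      exact absurd heq (ne_of_gt (gFun_gt hμ1 hμ12 hρ0 hρh ht hs hG))
    by_cases hsA1 : (μ₂ - 2 * ρ * μ₁) * s = 1
    · constructor
      · rw [eq_div_iff hμ1.ne']
        have h3 : (μ₂ - 2 * ρ * μ₁) * μ₂ * s = μ₂ := by linear_combination μ₂ * hsA1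
        have h5 : μ₁ * (t * μ₁) = μ₁ * (1 - 2 * ρ) := by linear_combination hu - h3
        exact mul_left_cancel₀ hμ1.ne' h5
      · rw [eq_div_iff hν.ne']
        linear_combination hsA1
    · exfalso
      exact absurd heq (ne_of_gt (gap2 μ₁ μ₂ ρ t s hμ1 hμ12 hρ0 hρh ht hs hu hms hsA1))
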